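/- arXiv:math/0401057 — 2 statements merged into one kernel-verified Lean document; each statement's English description precedes it below -/
import Mathlib

section
/- For all real numbers y and z, in the ring of formal power series in t over ℝ one has Σ_{n=0}^{∞} C(y+n(z+1), n) · (-t(1+t)^z)^n = (1+t)^{-y} / (1 + t(z+1)). -/
open Finset PowerSeries

/-- Generalized binomial coefficient `C(x, k) = x(x-1)⋯(x-k+1)/k!` for real `x`. -/
noncomputable def gchoose (x : ℝ) (k : ℕ) : ℝ :=
  (∏ i ∈ Finset.range k, (x - i)) / (Nat.factorial k)

/-- The binomial series `(1+t)^x = Σ C(x,k) t^k` as a formal power series. -/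
noncomputable def binomSeries (x : ℝ) : PowerSeries ℝ :=
  PowerSeries.mk fun k => gchoose x k

section
open Polynomial

lemma descPochhammer_smeval_eq_prod (x : ℝ) (k : ℕ) :
    (descPochhammer ℤ k).smeval x = ∏ i ∈ Finset.range k, (x - i) := by
  induction k with
  | zero => simp [descPochhammer_zero, smeval_one]
  | succ n ih =>
    rw [descPochhammer_succ_right, smeval_mul, ih, Finset.prod_range_succ]
    congr 1
    simp [smeval_sub, smeval_X, smeval_natCast]

lemma gchoose_eq_ringChoose (x : ℝ) (k : ℕ) : gchoose x k = Ring.choose x k := by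
  have h := Ring.descPochhammer_eq_factorial_smul_choose (R := ℝ) x k
  rw [descPochhammer_smeval_eq_prod, nsmul_eq_mul] at h
  rw [gchoose, h]
  field_simp

lemma gchoose_add (a b : ℝ) (k : ℕ) :
    gchoose (a + b) k = ∑ ij ∈ antidiagonal k, gchoose a ij.1 * gchoose b ij.2 := by
  simp only [gchoose_eq_ringChoose]
  exact Ring.add_choose_eq k (Commute.all a b)

end

lemma gchoose_zero_right (x : ℝ) : gchoose x 0 = 1 := by simp [gchoose]

lemma gchoose_succ_absorb (x : ℝ) (k : ℕ) :
    (k + 1 : ℝ) * gchoose x (k+1) = (x - k) * gchoose x k := by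
  rw [gchoose, gchoose, Finset.prod_range_succ, Nat.factorial_succ]
  push_cast
  have h : ((k:ℝ)+1) ≠ 0 := by positivity
  field_simp

lemma coeff_binomSeries (x : ℝ) (k : ℕ) : coeff k (binomSeries x) = gchoose x k := by
  simp [binomSeries]

lemma binomSeries_mul (a b : ℝ) : binomSeries a * binomSeries b = binomSeries (a + b) := by
  ext k
  rw [coeff_mul, coeff_binomSeries, gchoose_add]
  exact Finset.sum_congr rfl fun ij _ => by rw [coeff_binomSeries, coeff_binomSeries]

lemma gchoose_zero_left (k : ℕ) : gchoose 0 k = if k = 0 then 1 else 0 := by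
  cases k with
  | zero => simp [gchoose_zero_right]
  | succ n =>
    simp only [Nat.succ_ne_zero, if_false, gchoose]
    rw [_root_.div_eq_zero_iff]
    left
    apply Finset.prod_eq_zero (Finset.mem_range.mpr (Nat.succ_pos n))
    simp

lemma binomSeries_zero : binomSeries 0 = 1 := by
  ext k
  rw [coeff_binomSeries, gchoose_zero_left, coeff_one]

lemma gchoose_one (k : ℕ) : gchoose 1 k = if k = 0 ∨ k = 1 then 1 else 0 := by
  match k with
  | 0 => simp [gchoose_zero_right]
  | 1 => simp [gchoose]
  | (n+2) =>
    simp only [gchoose]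
    rw [if_neg (by omega), _root_.div_eq_zero_iff]
    left
    apply Finset.prod_eq_zero (i := 1) (Finset.mem_range.mpr (by omega))
    norm_num

lemma binomSeries_one : binomSeries 1 = 1 + X := by
  ext k
  rw [coeff_binomSeries, gchoose_one]
  match k with
  | 0 => simp
  | 1 => simp
  | (n+2) => simp [coeff_one, coeff_X]

lemma binomSeries_pow (x : ℝ) (n : ℕ) : (binomSeries x)^n = binomSeries (n * x) := by
  induction n with
  | zero => simp [binomSeries_zero]
  | succ n ih =>
    rw [pow_succ, ih, binomSeries_mul]
    congr 1
    push_cast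
    ring

lemma derivative_binomSeries (x : ℝ) :
    (1 + X) * (d⁄dX ℝ (binomSeries x)) = C x * binomSeries x := by
  ext k
  rw [add_mul, one_mul, map_add, coeff_C_mul, coeff_binomSeries, coeff_derivative,
    coeff_binomSeries]
  cases k with
  | zero =>
    rw [coeff_zero_X_mul]
    have := gchoose_succ_absorb x 0
    push_cast at this ⊢
    simp only [gchoose_zero_right, mul_one] at this
    rw [gchoose_zero_right]
    simpa using this
  | succ n =>
    rw [coeff_succ_X_mul, coeff_derivative, coeff_binomSeries]
    have h1 := gchoose_succ_absorb x (n+1)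
    have h2 := gchoose_succ_absorb x n
    push_cast at h1 h2 ⊢
    nlinarith [h1, h2]

noncomputable abbrev wS (z : ℝ) : PowerSeries ℝ := -(X * binomSeries z)

noncomputable def bb (z y : ℝ) (n : ℕ) : ℝ := gchoose (y + n * (z + 1)) n

noncomputable def SS (z : ℝ) (K : ℕ) (y : ℝ) : PowerSeries ℝ :=
  ∑ n ∈ Finset.range (K+1), C (bb z y n) * (wS z)^n

noncomputable def TT (z : ℝ) (K : ℕ) (y : ℝ) : PowerSeries ℝ :=
  ∑ n ∈ Finset.range (K+1), C ((n : ℝ) * bb z y n) * (wS z)^n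

noncomputable def Dz (z : ℝ) : PowerSeries ℝ := (1 + C (z+1) * X)⁻¹

noncomputable def QQ (z y : ℝ) : PowerSeries ℝ := binomSeries (-y) * Dz z

noncomputable def MM (z y : ℝ) : PowerSeries ℝ := Dz z * (X * (1+X) * (d⁄dX ℝ (QQ z y)))

lemma L7 (z : ℝ) : (1 + C (z+1) * X) * Dz z = 1 := by
  apply PowerSeries.mul_inv_cancel
  simp

lemma Lw (z : ℝ) : X * (1+X) * (d⁄dX ℝ (wS z)) = wS z * (1 + C (z+1) * X) := by
  have hd : d⁄dX ℝ (wS z) = -(X * d⁄dX ℝ (binomSeries z) + binomSeries z) := by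
    rw [wS, map_neg, Derivation.leibniz]
    simp [smul_eq_mul, mul_comm]
  rw [hd]
  have key : X * (1+X) * (X * d⁄dX ℝ (binomSeries z) + binomSeries z)
      = (X * binomSeries z) * (1 + C (z+1) * X) := by
    have e : X * (X * ((1+X) * d⁄dX ℝ (binomSeries z))) = X * (X * (C z * binomSeries z)) := by
      rw [derivative_binomSeries]
    have expand : X * (1+X) * (X * d⁄dX ℝ (binomSeries z) + binomSeries z)
        = X * (X * ((1+X) * d⁄dX ℝ (binomSeries z))) + X * (1+X) * binomSeries z := by ring
    rw [expand, e]
    have : C (z+1) = C z + 1 := by rw [map_add, map_one]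
    rw [this]
    ring
  calc X * (1+X) * -(X * d⁄dX ℝ (binomSeries z) + binomSeries z)
      = -(X * (1+X) * (X * d⁄dX ℝ (binomSeries z) + binomSeries z)) := by ring
    _ = -((X * binomSeries z) * (1 + C (z+1) * X)) := by rw [key]
    _ = wS z * (1 + C (z+1) * X) := by rw [wS]; ring

lemma Lwpow (z : ℝ) (n : ℕ) :
    X * (1+X) * (d⁄dX ℝ ((wS z)^n)) = C (n : ℝ) * ((1 + C (z+1) * X) * (wS z)^n) := by
  induction n with
  | zero => simp
  | succ n ih =>
    rw [pow_succ, Derivation.leibniz, smul_eq_mul, smul_eq_mul]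
    have expand : X * (1+X) * ((wS z)^n * d⁄dX ℝ (wS z) + wS z * d⁄dX ℝ ((wS z)^n))
        = (wS z)^n * (X * (1+X) * d⁄dX ℝ (wS z)) + wS z * (X * (1+X) * d⁄dX ℝ ((wS z)^n)) := by
      ring
    rw [expand, ih, Lw]
    have : ((n+1 : ℕ) : ℝ) = (n : ℝ) + 1 := by push_cast; ring
    simp only [this, map_add, map_one]
    ring

lemma L3 (z : ℝ) (K : ℕ) (y : ℝ) :
    X * (1+X) * (d⁄dX ℝ (SS z K y)) = (1 + C (z+1) * X) * TT z K y := by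
  rw [SS, TT, map_sum, Finset.mul_sum, Finset.mul_sum]
  apply Finset.sum_congr rfl
  intro n _
  rw [Derivation.leibniz, smul_eq_mul, smul_eq_mul, derivative_C, mul_zero, add_zero]
  have expand : X * (1+X) * (C (bb z y n) * d⁄dX ℝ ((wS z)^n))
      = C (bb z y n) * (X * (1+X) * d⁄dX ℝ ((wS z)^n)) := by ring
  rw [expand, Lwpow, map_mul]
  ring

lemma L4 (z : ℝ) (K : ℕ) (y : ℝ) :
    TT z (K+1) y = wS z * (C (y+z+1) * SS z K (y+z+1) + C z * TT z K (y+z+1)) := by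
  rw [TT, Finset.sum_range_succ']
  simp only [Nat.cast_zero, zero_mul, map_zero, zero_mul, add_zero, pow_zero]
  have key : ∀ n : ℕ, ((n+1 : ℕ) : ℝ) * bb z y (n+1)
      = (y+z+1) * bb z (y+z+1) n + z * ((n:ℝ) * bb z (y+z+1) n) := by
    intro n
    rw [bb, bb]
    push_cast
    have hab := gchoose_succ_absorb (y + ((n:ℝ)+1) * (z+1)) n
    have harg : y + ((n:ℝ)+1) * (z+1) = y + z + 1 + (n:ℝ)*(z+1) := by ring
    rw [harg] at hab
    rw [show y + ((n:ℝ)+1)*(z+1) = y+z+1+(n:ℝ)*(z+1) from by ring]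
    rw [hab]
    ring
  calc ∑ n ∈ Finset.range (K+1), C (((n+1:ℕ):ℝ) * bb z y (n+1)) * (wS z)^(n+1)
      = ∑ n ∈ Finset.range (K+1), wS z * ((C (y+z+1) * C (bb z (y+z+1) n)
          + C z * C ((n:ℝ) * bb z (y+z+1) n)) * (wS z)^n) := by
        apply Finset.sum_congr rfl
        intro n _
        rw [key n, map_add, map_mul, map_mul, pow_succ]
        ring
    _ = wS z * (C (y+z+1) * SS z K (y+z+1) + C z * TT z K (y+z+1)) := by
        rw [SS, TT, ← Finset.mul_sum]
        congr 1
        rw [Finset.mul_sum, Finset.mul_sum, ← Finset.sum_add_distrib]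
        apply Finset.sum_congr rfl
        intro n _
        ring

lemma L5 (z y : ℝ) : (1 + C (z+1) * X) * MM z y = X * (1+X) * (d⁄dX ℝ (QQ z y)) := by
  rw [MM, ← mul_assoc, L7, one_mul]

lemma dDz (z : ℝ) : d⁄dX ℝ (Dz z) = -(C (z+1)) * (Dz z)^2 := by
  have h : d⁄dX ℝ (1 + C (z+1) * X) = C (z+1) := by
    rw [map_add, Derivation.map_one_eq_zero, Derivation.leibniz, derivative_C, derivative_X]
    simp [smul_eq_mul]
  rw [Dz, derivative_inv', h]
  ring

lemma Mclosed (z y : ℝ) :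
    MM z y = binomSeries (-y) * (C (-y) * X * (Dz z)^2
      - C (z+1) * (X * (1+X) * (Dz z)^3)) := by
  rw [MM, QQ, Derivation.leibniz, smul_eq_mul, smul_eq_mul, dDz]
  have hB := derivative_binomSeries (-y)
  calc Dz z * (X * (1+X) * (binomSeries (-y) * (-(C (z+1)) * (Dz z)^2)
        + Dz z * d⁄dX ℝ (binomSeries (-y))))
      = (Dz z)^2 * X * ((1+X) * d⁄dX ℝ (binomSeries (-y)))
        - C (z+1) * (X * (1+X) * (Dz z)^3) * binomSeries (-y) := by ring
    _ = binomSeries (-y) * (C (-y) * X * (Dz z)^2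
        - C (z+1) * (X * (1+X) * (Dz z)^3)) := by rw [hB]; ring

lemma binomSeries_ne_zero (x : ℝ) : binomSeries x ≠ 0 := by
  intro h
  have h0 : coeff 0 (binomSeries x) = 1 := by
    simp [binomSeries, gchoose_zero_right]
  rw [h, map_zero] at h0
  exact zero_ne_one h0

lemma U_ne_zero (z : ℝ) : (1 + C (z+1) * X : PowerSeries ℝ) ≠ 0 := by
  intro h
  have h0 : constantCoeff (1 + C (z+1) * X : PowerSeries ℝ) = 1 := by simp
  rw [h, map_zero] at h0
  exact zero_ne_one h0

lemma L6 (z y : ℝ) :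
    MM z y = wS z * (C (y+z+1) * QQ z (y+z+1) + C z * MM z (y+z+1)) := by
  rw [Mclosed, Mclosed, QQ]
  have hUD : (1 + C (z+1) * X) * Dz z = 1 := L7 z
  have hD2 : (1 + C (z+1) * X)^3 * (Dz z)^2 = 1 + C (z+1) * X := by
    calc (1 + C (z+1) * X)^3 * (Dz z)^2
        = (1 + C (z+1) * X) * ((1 + C (z+1) * X) * Dz z)
          * ((1 + C (z+1) * X) * Dz z) := by ring
      _ = 1 + C (z+1) * X := by rw [hUD]; ring
  have hD3 : (1 + C (z+1) * X)^3 * (Dz z)^3 = 1 := by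
    calc (1 + C (z+1) * X)^3 * (Dz z)^3 = ((1 + C (z+1) * X) * Dz z)^3 := by ring
      _ = 1 := by rw [hUD]; ring
  have hB1 : binomSeries z * binomSeries (-(y+z+1)) = binomSeries (-(y+1)) := by
    rw [binomSeries_mul]; congr 1; ring
  have hB : binomSeries (-y) = binomSeries (-(y+1)) * (1+X) := by
    rw [← binomSeries_one, binomSeries_mul]; congr 1; ring
  have key : (1+X) * (C (-y) * X * (Dz z)^2 - C (z+1) * (X * (1+X) * (Dz z)^3))
      = -X * (C (y+z+1) * Dz z
          + C z * (C (-(y+z+1)) * X * (Dz z)^2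
            - C (z+1) * (X * (1+X) * (Dz z)^3))) := by
    apply mul_left_cancel₀ (pow_ne_zero 3 (U_ne_zero z))
    calc (1 + C (z+1) * X)^3
          * ((1+X) * (C (-y) * X * (Dz z)^2 - C (z+1) * (X * (1+X) * (Dz z)^3)))
        = (1+X) * (C (-y) * X * ((1 + C (z+1) * X)^3 * (Dz z)^2)
            - C (z+1) * (X * (1+X) * ((1 + C (z+1) * X)^3 * (Dz z)^3))) := by ring
      _ = (1+X) * (C (-y) * X * (1 + C (z+1) * X)
            - C (z+1) * (X * (1+X) * 1)) := by rw [hD2, hD3]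
      _ = -X * (C (y+z+1) * ((1 + C (z+1) * X)^2 * 1)
            + C z * (C (-(y+z+1)) * X * (1 + C (z+1) * X)
              - C (z+1) * (X * (1+X) * 1))) := by
          simp only [map_add, map_neg, map_one]
          ring
      _ = -X * (C (y+z+1) * ((1 + C (z+1) * X)^2 * ((1 + C (z+1) * X) * Dz z))
            + C z * (C (-(y+z+1)) * X * ((1 + C (z+1) * X)^3 * (Dz z)^2)
              - C (z+1) * (X * (1+X) * ((1 + C (z+1) * X)^3 * (Dz z)^3)))) := by
          rw [hUD, hD2, hD3]
      _ = (1 + C (z+1) * X)^3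
          * (-X * (C (y+z+1) * Dz z
            + C z * (C (-(y+z+1)) * X * (Dz z)^2
              - C (z+1) * (X * (1+X) * (Dz z)^3)))) := by ring
  calc binomSeries (-y) * (C (-y) * X * (Dz z)^2 - C (z+1) * (X * (1+X) * (Dz z)^3))
      = binomSeries (-(y+1)) * ((1+X) * (C (-y) * X * (Dz z)^2
          - C (z+1) * (X * (1+X) * (Dz z)^3))) := by rw [hB]; ring
    _ = binomSeries (-(y+1)) * (-X * (C (y+z+1) * Dz z
          + C z * (C (-(y+z+1)) * X * (Dz z)^2
            - C (z+1) * (X * (1+X) * (Dz z)^3)))) := by rw [key]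
    _ = wS z * (C (y+z+1) * (binomSeries (-(y+z+1)) * Dz z)
          + C z * (binomSeries (-(y+z+1)) * (C (-(y+z+1)) * X * (Dz z)^2
            - C (z+1) * (X * (1+X) * (Dz z)^3)))) := by
        rw [wS, ← hB1]; ring

lemma coeff_w_pow_zero (z : ℝ) {n k : ℕ} (h : k < n) : coeff k ((wS z)^n) = 0 := by
  have : (wS z)^n = X^n * (-(binomSeries z))^n := by
    rw [← mul_pow]; congr 1; rw [wS]; ring
  rw [this, coeff_X_pow_mul', if_neg (by omega)]

lemma SS_stable (z : ℝ) {k K : ℕ} (y : ℝ) (h : k ≤ K) :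
    coeff k (SS z K y) = coeff k (SS z k y) := by
  rw [SS, SS, map_sum, map_sum]
  symm
  apply Finset.sum_subset
  · intro x hx; simp only [Finset.mem_range] at *; omega
  · intro x _ hx
    simp only [Finset.mem_range] at hx
    rw [coeff_C_mul, coeff_w_pow_zero z (by omega), mul_zero]

lemma coeff_mul_zero_of_right {f g : PowerSeries ℝ} {k : ℕ}
    (h : ∀ q ≤ k, coeff q g = 0) : coeff k (f * g) = 0 := by
  rw [coeff_mul]
  apply Finset.sum_eq_zero
  intro p hp
  rw [Finset.HasAntidiagonal.mem_antidiagonal] at hp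
  rw [h p.2 (by omega), mul_zero]

lemma coeff_XXd_zero {f : PowerSeries ℝ} {k : ℕ}
    (h : ∀ j ≤ k, coeff j f = 0) : ∀ q ≤ k, coeff q (X*(1+X)*(d⁄dX ℝ f)) = 0 := by
  intro q hq
  have assoc : X*(1+X)*(d⁄dX ℝ f) = X * ((1+X)*(d⁄dX ℝ f)) := by ring
  rw [assoc]
  cases q with
  | zero => exact coeff_zero_X_mul _
  | succ q' =>
    rw [coeff_succ_X_mul, add_mul, one_mul, map_add, coeff_derivative,
      h (q'+1) (by omega), zero_mul, zero_add]
    cases q' with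
    | zero => exact coeff_zero_X_mul _
    | succ q'' =>
      rw [coeff_succ_X_mul, coeff_derivative, h (q''+1) (by omega), zero_mul]

lemma coeff_w_mul_congr (z : ℝ) {f g : PowerSeries ℝ} {k : ℕ}
    (h : ∀ q ≤ k, coeff q f = coeff q g) :
    coeff (k+1) (wS z * f) = coeff (k+1) (wS z * g) := by
  have e : ∀ u : PowerSeries ℝ, wS z * u = -(X * (binomSeries z * u)) := by
    intro u; rw [wS]; ring
  rw [e, e, map_neg, map_neg, coeff_succ_X_mul, coeff_succ_X_mul, coeff_mul, coeff_mul]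
  congr 1
  apply Finset.sum_congr rfl
  intro p hp
  rw [Finset.HasAntidiagonal.mem_antidiagonal] at hp
  rw [h p.2 (by omega)]


lemma coeff_U_mul (a : ℝ) (f : PowerSeries ℝ) (k : ℕ) :
    coeff (k+1) ((1 + C a * X) * f) = coeff (k+1) f + a * coeff k f := by
  rw [add_mul, one_mul, map_add, mul_assoc, coeff_C_mul, coeff_succ_X_mul]

lemma coeff_XXd_eval (f : PowerSeries ℝ) (M : ℕ) :
    coeff (M+1) (X*(1+X)*(d⁄dX ℝ f))
      = coeff (M+1) f * (M+1) + coeff M f * M := by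
  have assoc : X*(1+X)*(d⁄dX ℝ f) = X * ((1+X)*(d⁄dX ℝ f)) := by ring
  rw [assoc, coeff_succ_X_mul, add_mul, one_mul, map_add, coeff_derivative]
  congr 1
  cases M with
  | zero => simp
  | succ M' =>
    rw [coeff_succ_X_mul, coeff_derivative]
    push_cast
    ring

theorem key (z : ℝ) (m : ℕ) : ∀ y : ℝ, coeff m (SS z m y) = coeff m (QQ z y) := by
  induction m using Nat.strong_induction_on with
  | _ m IH =>
  intro y
  have coeffDz0 : constantCoeff (Dz z) = 1 := by
    have h := congrArg (constantCoeff) (L7 z)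
    simpa using h
  cases m with
  | zero =>
    have hS : coeff 0 (SS z 0 y) = 1 := by
      rw [SS, Finset.sum_range_one, pow_zero, mul_one]
      simp [bb, gchoose_zero_right]
    have hQ : coeff 0 (QQ z y) = 1 := by
      rw [QQ, coeff_zero_eq_constantCoeff, map_mul, coeffDz0, mul_one]
      simp [binomSeries, ← coeff_zero_eq_constantCoeff, gchoose_zero_right]
    rw [hS, hQ]
  | succ M =>
    have h0 : ∀ k K, ∀ y' : ℝ, k < M+1 → k ≤ K →
        coeff k (SS z K y') = coeff k (QQ z y') := by
      intro k K y' hk hkK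
      rw [SS_stable z y' hkK]
      exact IH k hk y'
    have hT : ∀ k K, ∀ y' : ℝ, k < M+1 → k ≤ K →
        coeff k (TT z K y') = coeff k (MM z y') := by
      intro k K y' hk hkK
      have hsub : (1 + C (z+1)*X) * (TT z K y' - MM z y')
          = X*(1+X)*(d⁄dX ℝ (SS z K y' - QQ z y')) := by
        rw [map_sub, mul_sub, mul_sub, L3, L5]
      have e : TT z K y' - MM z y' = Dz z * (X*(1+X)*(d⁄dX ℝ (SS z K y' - QQ z y'))) := by
        calc TT z K y' - MM z y'
            = (Dz z * (1 + C (z+1)*X)) * (TT z K y' - MM z y') := by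
              rw [mul_comm (Dz z), L7, one_mul]
          _ = Dz z * ((1 + C (z+1)*X) * (TT z K y' - MM z y')) := by ring
          _ = _ := by rw [hsub]
      have hz : ∀ j, j ≤ k → coeff j (SS z K y' - QQ z y') = 0 := by
        intro j hj
        rw [map_sub, h0 j K y' (by omega) (le_trans hj hkK), sub_self]
      have hzero : coeff k (TT z K y' - MM z y') = 0 := by
        rw [e]
        exact coeff_mul_zero_of_right (coeff_XXd_zero hz)
      rw [map_sub] at hzero
      linarith
    have hTM : coeff (M+1) (TT z (M+1) y) = coeff (M+1) (MM z y) := by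
      rw [L4 z M y, L6 z y]
      apply coeff_w_mul_congr
      intro q hq
      rw [map_add (coeff q), map_add (coeff q), coeff_C_mul, coeff_C_mul, coeff_C_mul,
        coeff_C_mul, h0 q M _ (by omega) hq, hT q M _ (by omega) hq]
    have hfinS := congrArg (coeff (M+1)) (L3 z (M+1) y)
    have hfinQ := congrArg (coeff (M+1)) (L5 z y)
    rw [coeff_XXd_eval] at hfinS
    rw [coeff_XXd_eval] at hfinQ
    rw [coeff_U_mul] at hfinS hfinQ
    rw [hTM] at hfinS
    rw [hT M (M+1) y (by omega) (by omega)] at hfinS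
    rw [h0 M (M+1) y (by omega) (by omega)] at hfinS
    rw [hfinQ] at hfinS
    have hM1 : ((M:ℝ)+1) ≠ 0 := by positivity
    have h' : coeff (M+1) (SS z (M+1) y) * ((M:ℝ)+1)
        = coeff (M+1) (QQ z y) * ((M:ℝ)+1) := by linarith
    exact mul_right_cancel₀ hM1 h'

/-- `Σ_{n≥0} C(y+n(z+1), n) (-t(1+t)^z)^n = (1+t)^{-y}/(1+t(z+1))`, expressed
coefficientwise: terms with `n > m` do not contribute to the coefficient of `t^m`. -/
theorem binom_series_substitution (y z : ℝ) (m : ℕ) :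
    ∑ n ∈ Finset.range (m + 1),
        gchoose (y + n * (z + 1)) n *
          PowerSeries.coeff m ((-(PowerSeries.X * binomSeries z)) ^ n) =
      PowerSeries.coeff m
        (binomSeries (-y) * (1 + PowerSeries.C (z + 1) * PowerSeries.X)⁻¹) := by
  have h := key z m y
  rw [SS, map_sum] at h
  simp only [coeff_C_mul, bb, QQ, Dz, wS] at h
  exact h
end

section
/- For every positive integer m and all real numbers x and z, one has (m+1) · [t^m]((1+t)^x/(1+t(z+1))) − [t^m]((1+t)^x/(1+t(z+1))^2) = [t^m](x·t·(1+t)^{x-1}/(1+t(z+1))), where [t^m] denotes the coefficient of t^m in a formal power series. -/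
open Finset PowerSeries

lemma geom_mul (w : ℝ) :
    (1 + PowerSeries.C (R := ℝ) w * PowerSeries.X) * PowerSeries.mk (fun k => (-w)^k) = 1 := by
  ext n
  cases n with
  | zero => simp
  | succ n =>
    rw [add_mul, one_mul, map_add, mul_assoc, PowerSeries.coeff_C_mul,
      PowerSeries.coeff_succ_X_mul, PowerSeries.coeff_mk, PowerSeries.coeff_mk,
      PowerSeries.coeff_one]
    simp [pow_succ]
    ring

lemma geom_inv (w : ℝ) :
    (1 + PowerSeries.C (R := ℝ) w * PowerSeries.X)⁻¹ = PowerSeries.mk (fun k => (-w)^k) := by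
  rw [PowerSeries.inv_eq_iff_mul_eq_one, mul_comm]
  · exact geom_mul w
  · simp

lemma geom_sq (w : ℝ) :
    (PowerSeries.mk (fun k => (-w)^k)) ^ 2
      = PowerSeries.mk (fun k : ℕ => ((k : ℝ) + 1) * (-w)^k) := by
  ext n
  rw [sq, PowerSeries.coeff_mul, Finset.Nat.sum_antidiagonal_eq_sum_range_succ_mk,
    PowerSeries.coeff_mk]
  have : ∀ k ∈ Finset.range (n+1),
      (PowerSeries.coeff (R := ℝ) k (PowerSeries.mk fun k => (-w)^k)) *
        (PowerSeries.coeff (R := ℝ) (n - k) (PowerSeries.mk fun k => (-w)^k)) = (-w)^n := by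
    intro k hk
    rw [PowerSeries.coeff_mk, PowerSeries.coeff_mk, ← pow_add,
      Nat.add_sub_cancel' (Nat.lt_succ_iff.mp (Finset.mem_range.mp hk))]
  rw [Finset.sum_congr rfl this, Finset.sum_const, Finset.card_range, nsmul_eq_mul]
  push_cast
  ring

lemma gchoose_succ (x : ℝ) (k : ℕ) :
    ((k : ℝ) + 1) * gchoose x (k + 1) = x * gchoose (x - 1) k := by
  unfold gchoose
  rw [Finset.prod_range_succ', Nat.factorial_succ]
  have hfac : (Nat.factorial k : ℝ) ≠ 0 := Nat.cast_ne_zero.mpr (Nat.factorial_ne_zero k)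
  have : ∀ i ∈ Finset.range k, (x - ((i:ℕ) + 1 : ℕ)) = (x - 1 - i) := by
    intro i _; push_cast; ring
  rw [Finset.prod_congr rfl this]
  push_cast
  field_simp
  ring

theorem coeff_recurrence (m : ℕ) (hm : 0 < m) (x z : ℝ) :
    (m + 1 : ℝ) *
          PowerSeries.coeff (R := ℝ) m
            (binomSeries x * (1 + PowerSeries.C (R := ℝ) (z + 1) * PowerSeries.X)⁻¹) -
        PowerSeries.coeff (R := ℝ) m
          (binomSeries x * ((1 + PowerSeries.C (R := ℝ) (z + 1) * PowerSeries.X) ^ 2)⁻¹) =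
      PowerSeries.coeff (R := ℝ) m
        (PowerSeries.C (R := ℝ) x * PowerSeries.X * binomSeries (x - 1) *
          (1 + PowerSeries.C (R := ℝ) (z + 1) * PowerSeries.X)⁻¹) := by
  obtain ⟨n, rfl⟩ := Nat.exists_eq_succ_of_ne_zero hm.ne'
  set w := z + 1 with hw
  have hR : PowerSeries.C (R := ℝ) x * PowerSeries.X * binomSeries (x - 1) *
      (1 + PowerSeries.C (R := ℝ) w * PowerSeries.X)⁻¹
      = PowerSeries.C (R := ℝ) x *
          (PowerSeries.X * (binomSeries (x-1) * PowerSeries.mk (fun k => (-w)^k))) := by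
    rw [geom_inv]; ring
  have hsqinv : ((1 + PowerSeries.C (R := ℝ) w * PowerSeries.X) ^ 2)⁻¹
      = PowerSeries.mk (fun k : ℕ => ((k : ℝ) + 1) * (-w)^k) := by
    rw [PowerSeries.inv_eq_iff_mul_eq_one, ← geom_sq, ← mul_pow, mul_comm, geom_mul, one_pow]
    simp
  rw [hR, PowerSeries.coeff_C_mul, PowerSeries.coeff_succ_X_mul, geom_inv, hsqinv]
  rw [binomSeries, binomSeries, PowerSeries.coeff_mul, PowerSeries.coeff_mul,
    PowerSeries.coeff_mul,
    Finset.Nat.sum_antidiagonal_eq_sum_range_succ_mk,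
    Finset.Nat.sum_antidiagonal_eq_sum_range_succ_mk,
    Finset.Nat.sum_antidiagonal_eq_sum_range_succ_mk]
  simp only [PowerSeries.coeff_mk]
  rw [Finset.mul_sum, ← Finset.sum_sub_distrib, Finset.sum_range_succ', Finset.mul_sum]
  have h0 : ((n:ℝ) + 1 + 1) * (gchoose x 0 * (-w) ^ (n + 1 - 0)) -
      gchoose x 0 * ((((n + 1 - 0 : ℕ) : ℝ) + 1) * (-w) ^ (n + 1 - 0)) = 0 := by
    push_cast
    ring
  simp only [Nat.succ_eq_add_one, Nat.cast_add, Nat.cast_one]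
  rw [h0, add_zero]
  refine Finset.sum_congr rfl fun k hk => ?_
  have hkn : k ≤ n := Nat.lt_succ_iff.mp (Finset.mem_range.mp hk)
  have hsub : n + 1 - (k + 1) = n - k := Nat.succ_sub_succ n k
  rw [hsub, Nat.cast_sub hkn]
  rw [show ((n:ℝ) + 1 + 1) * (gchoose x (k+1) * (-w) ^ (n - k)) -
      gchoose x (k+1) * ((((n:ℝ) - k) + 1) * (-w) ^ (n - k))
      = (((k:ℝ) + 1) * gchoose x (k+1)) * (-w) ^ (n - k) by ring]
  rw [gchoose_succ]
  ring
end
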